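/- Let a : ℕ → ℝ and consider the infinite product probability measures P₊ := ⨂_{n∈ℕ} gaussianReal(aₙ, 1) and P₋ := ⨂_{n∈ℕ} gaussianReal(0, 1) on ℕ → ℝ. Then: (i) for every finite n, the restrictions (finite products over Fin n) of P₊ and P₋ are mutually absolutely continuous (equivalent); and (ii) if ∑ₙ aₙ² = ∞ (i.e. (aₙ²) is not summable), then P₊ and P₋ are mutually singular. (This is the paper's structure of regular inference with resolution: W₊|_t ∼ W₋|_t at every finite stage, while W₊ ⟂ W₋ overall, which guarantees risk-resolution.) -/

import Mathlib

open MeasureTheory ProbabilityTheory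

open Real Filter


lemma pi_ac : ∀ (n : ℕ) (μ ν : Fin n → Measure ℝ),
    (∀ i, IsProbabilityMeasure (μ i)) → (∀ i, IsProbabilityMeasure (ν i)) →
    (∀ i, μ i ≪ ν i) → Measure.pi μ ≪ Measure.pi ν := by
  intro n
  induction n with
  | zero =>
    intro μ ν _ _ _
    rw [Measure.pi_of_empty, Measure.pi_of_empty]
  | succ n ih =>
    intro μ ν hμ hν h
    haveI := hμ; haveI := hν
    have e := MeasurableEquiv.piFinSuccAbove (fun _ : Fin (n + 1) => ℝ) 0
    have h1 := ((measurePreserving_piFinSuccAbove μ 0).symm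
      (MeasurableEquiv.piFinSuccAbove (fun _ : Fin (n + 1) => ℝ) 0)).map_eq
    have h2 := ((measurePreserving_piFinSuccAbove ν 0).symm
      (MeasurableEquiv.piFinSuccAbove (fun _ : Fin (n + 1) => ℝ) 0)).map_eq
    rw [← h1, ← h2]
    refine Measure.AbsolutelyContinuous.map ?_ (MeasurableEquiv.measurable _)
    exact Measure.AbsolutelyContinuous.prod (h 0)
      (ih _ _ (fun i => hμ _) (fun i => hν _) (fun i => h _))

lemma lintegral_pi_prod : ∀ (n : ℕ) (μ : Fin n → Measure ℝ),
    (∀ i, IsProbabilityMeasure (μ i)) → ∀ (f : Fin n → ℝ → ENNReal),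
    (∀ i, Measurable (f i)) →
    ∫⁻ x, ∏ i, f i (x i) ∂Measure.pi μ = ∏ i, ∫⁻ x, f i x ∂(μ i) := by
  intro n
  induction n with
  | zero =>
    intro μ _ f _
    simp [Measure.pi_of_empty]
  | succ n ih =>
    intro μ hμ f hf
    haveI := hμ
    have hmp := measurePreserving_piFinSuccAbove μ 0
    have hG : Measurable (fun p : ℝ × (Fin n → ℝ) =>
        f 0 p.1 * ∏ j : Fin n, f (Fin.succ j) (p.2 j)) := by
      refine Measurable.mul ((hf 0).comp measurable_fst) ?_
      exact (Finset.measurable_prod _ fun j _ =>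
        (hf _).comp ((measurable_pi_apply j).comp measurable_snd))
    have key := hmp.lintegral_comp hG
    have hL : ∫⁻ x, ∏ i, f i (x i) ∂Measure.pi μ
        = ∫⁻ p, f 0 p.1 * ∏ j : Fin n, f (Fin.succ j) (p.2 j)
            ∂((μ 0).prod (Measure.pi fun j => μ ((0 : Fin (n+1)).succAbove j))) := by
      rw [← key]
      refine lintegral_congr fun x => ?_
      simp [MeasurableEquiv.piFinSuccAbove_apply, Fin.prod_univ_succ, Fin.zero_succAbove, Fin.tail]
    rw [hL, lintegral_prod_mul (f := f 0) (g := fun y : Fin n → ℝ => ∏ j : Fin n, f (Fin.succ j) (y j))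
      ((hf 0).aemeasurable)
      ((Finset.measurable_prod _ fun j _ =>
        (hf _).comp (measurable_pi_apply j)).aemeasurable)]
    have htail := ih (fun j => μ ((0 : Fin (n+1)).succAbove j)) (fun j => hμ _)
      (fun j => f (Fin.succ j)) (fun j => hf _)
    simp only [Fin.zero_succAbove] at htail ⊢
    rw [htail, Fin.prod_univ_succ]

lemma lintegral_exp_gaussianReal (m s : ℝ) :
    ∫⁻ x, ENNReal.ofReal (rexp (s * x)) ∂(gaussianReal m 1)
      = ENNReal.ofReal (rexp (s * m + s ^ 2 / 2)) := by
  have hg : Measurable fun x : ℝ => ENNReal.ofReal (rexp (s * x)) :=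
    (measurable_exp.comp (measurable_const_mul s)).ennreal_ofReal
  rw [gaussianReal_of_var_ne_zero _ one_ne_zero,
    lintegral_withDensity_eq_lintegral_mul _ (measurable_gaussianPDF _ _) hg]
  have hpt : ∀ x : ℝ, (gaussianPDF m 1 * fun x => ENNReal.ofReal (rexp (s * x))) x
      = ENNReal.ofReal (rexp (s * m + s ^ 2 / 2)) * gaussianPDF (m + s) 1 x := by
    intro x
    simp only [Pi.mul_apply, gaussianPDF, ← ENNReal.ofReal_mul (gaussianPDFReal_nonneg _ _ _),
      ← ENNReal.ofReal_mul (exp_nonneg _)]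
    congr 1
    simp only [gaussianPDFReal, NNReal.coe_one, mul_one]
    have h2 : rexp (-(x - m) ^ 2 / 2) * rexp (s * x)
        = rexp (s * m + s ^ 2 / 2) * rexp (-(x - (m + s)) ^ 2 / 2) := by
      rw [← exp_add, ← exp_add]; congr 1; ring
    rw [mul_assoc, h2]; ring
  simp_rw [hpt]
  rw [lintegral_const_mul _ (measurable_gaussianPDF _ _),
    lintegral_gaussianPDF_eq_one _ one_ne_zero, mul_one]

lemma chernoff {α : Type*} [MeasurableSpace α] (μ : Measure α) {T : α → ℝ} {c t : ℝ}
    (ht : 0 ≤ t) (hs : MeasurableSet {x | c ≤ T x}) :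
    μ {x | c ≤ T x} ≤ ENNReal.ofReal (rexp (-(t * c)))
      * ∫⁻ x, ENNReal.ofReal (rexp (t * T x)) ∂μ := by
  have key : ENNReal.ofReal (rexp (t * c)) * μ {x | c ≤ T x}
      ≤ ∫⁻ x, ENNReal.ofReal (rexp (t * T x)) ∂μ := by
    calc ENNReal.ofReal (rexp (t * c)) * μ {x | c ≤ T x}
        = ∫⁻ _ in {x | c ≤ T x}, ENNReal.ofReal (rexp (t * c)) ∂μ :=
          (setLIntegral_const _ _).symm
      _ ≤ ∫⁻ x in {x | c ≤ T x}, ENNReal.ofReal (rexp (t * T x)) ∂μ := by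
          refine setLIntegral_mono' hs fun x hx => ?_
          exact ENNReal.ofReal_le_ofReal (exp_le_exp.mpr (mul_le_mul_of_nonneg_left hx ht))
      _ ≤ ∫⁻ x, ENNReal.ofReal (rexp (t * T x)) ∂μ :=
          lintegral_mono' Measure.restrict_le_self le_rfl
  have hone : ENNReal.ofReal (rexp (-(t * c))) * ENNReal.ofReal (rexp (t * c)) = 1 := by
    rw [← ENNReal.ofReal_mul (exp_nonneg _), ← exp_add, neg_add_cancel, exp_zero,
      ENNReal.ofReal_one]
  calc μ {x | c ≤ T x}
      = ENNReal.ofReal (rexp (-(t * c))) * (ENNReal.ofReal (rexp (t * c)) * μ {x | c ≤ T x}) := by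
        rw [← mul_assoc, hone, one_mul]
    _ ≤ _ := mul_le_mul_right key _

lemma gauss_pi_bound (n : ℕ) (b m : Fin n → ℝ) (c : ℝ) :
    (Measure.pi fun i => gaussianReal (m i) 1) {x : Fin n → ℝ | c ≤ ∑ i, b i * x i}
      ≤ ENNReal.ofReal (rexp (-(c / 2) + ∑ i, (b i * m i / 2 + (b i) ^ 2 / 8))) := by
  have hmeas : Measurable fun x : Fin n → ℝ => ∑ i, b i * x i :=
    Finset.measurable_sum _ fun i _ => (measurable_pi_apply i).const_mul _
  have hs : MeasurableSet {x : Fin n → ℝ | c ≤ ∑ i, b i * x i} :=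
    measurableSet_le measurable_const hmeas
  refine le_trans (chernoff _ (t := 1/2) (by norm_num) hs) ?_
  have hsplit : ∀ x : Fin n → ℝ, ENNReal.ofReal (rexp (1/2 * ∑ i, b i * x i))
      = ∏ i, ENNReal.ofReal (rexp (b i / 2 * x i)) := by
    intro x
    rw [Finset.mul_sum, exp_sum, ENNReal.ofReal_prod_of_nonneg (fun i _ => exp_nonneg _)]
    exact Finset.prod_congr rfl fun i _ => by rw [show 1 / 2 * (b i * x i) = b i / 2 * x i by ring]
  simp_rw [hsplit]
  rw [lintegral_pi_prod n (fun i => gaussianReal (m i) 1) (fun i => inferInstance)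
    (fun i x => ENNReal.ofReal (rexp (b i / 2 * x)))
    (fun i => Measurable.ennreal_ofReal (by fun_prop))]
  have hfac : ∀ i, ∫⁻ x, ENNReal.ofReal (rexp (b i / 2 * x)) ∂(gaussianReal (m i) 1)
      = ENNReal.ofReal (rexp (b i / 2 * m i + (b i / 2) ^ 2 / 2)) :=
    fun i => lintegral_exp_gaussianReal (m i) (b i / 2)
  simp_rw [hfac]
  rw [← ENNReal.ofReal_prod_of_nonneg (fun i _ => exp_nonneg _), ← exp_sum,
    ← ENNReal.ofReal_mul (exp_nonneg _), ← exp_add]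
  apply ENNReal.ofReal_le_ofReal
  apply le_of_eq
  congr 1
  rw [Finset.sum_congr rfl (fun i _ => show b i / 2 * m i + (b i / 2) ^ 2 / 2
    = b i * m i / 2 + (b i) ^ 2 / 8 by ring)]
  linarith

/-- Regular inference with resolution: let `P₊`, `P₋` be the infinite product
measures on `ℕ → ℝ` with one-dimensional factors `N(aₙ,1)` resp. `N(0,1)`
(characterized by their finite-dimensional marginals). Then (i) at every finite
stage the finite products are mutually absolutely continuous, while (ii) if
`∑ aₙ² = ∞` then `P₊` and `P₋` are mutually singular. -/
theorem regular_inference_equivalent_then_singular (a : ℕ → ℝ)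
    (Pp Pm : Measure (ℕ → ℝ)) [IsProbabilityMeasure Pp] [IsProbabilityMeasure Pm]
    (hPp : ∀ n : ℕ, Measure.map (fun ω (i : Fin n) => ω i) Pp =
      Measure.pi fun i : Fin n => gaussianReal (a i) 1)
    (hPm : ∀ n : ℕ, Measure.map (fun ω (i : Fin n) => ω i) Pm =
      Measure.pi fun _ : Fin n => gaussianReal 0 1) :
    (∀ n : ℕ,
      (Measure.pi fun i : Fin n => gaussianReal (a i) 1) ≪
        (Measure.pi fun _ : Fin n => gaussianReal 0 1) ∧
      (Measure.pi fun _ : Fin n => gaussianReal 0 1) ≪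
        (Measure.pi fun i : Fin n => gaussianReal (a i) 1)) ∧
    (¬ Summable (fun n => (a n)^2) → Pp ⟂ₘ Pm) := by
  constructor
  · intro n
    constructor
    · exact pi_ac n _ _ (fun i => inferInstance) (fun i => inferInstance) fun i =>
        (gaussianReal_absolutelyContinuous _ one_ne_zero).trans
          (gaussianReal_absolutelyContinuous' _ one_ne_zero)
    · exact pi_ac n _ _ (fun i => inferInstance) (fun i => inferInstance) fun i =>
        (gaussianReal_absolutelyContinuous _ one_ne_zero).trans
          (gaussianReal_absolutelyContinuous' _ one_ne_zero)
  · intro hsum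
    -- notation
    set B : ℕ → ℝ := fun n => ∑ i ∈ Finset.range n, (a i) ^ 2 with hBdef
    have hBtendsto : Tendsto B atTop atTop :=
      (not_summable_iff_tendsto_nat_atTop_of_nonneg (fun n => sq_nonneg (a n))).mp hsum
    -- choose stages
    have hexists : ∀ k : ℕ, ∃ n, (k : ℝ) ≤ B n := fun k =>
      (hBtendsto.eventually (eventually_ge_atTop (k : ℝ))).exists
    choose N hN using hexists
    -- the separating sets
    set S : ℕ → Set (ℕ → ℝ) :=
      fun k => {ω | B (N k) / 2 ≤ ∑ i ∈ Finset.range (N k), a i * ω i} with hSdef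
    have hSmeas : ∀ k, MeasurableSet (S k) := by
      intro k
      exact measurableSet_le measurable_const
        (Finset.measurable_sum _ fun i _ => (measurable_pi_apply i).const_mul _)
    have hproj : ∀ n : ℕ, Measurable (fun ω : ℕ → ℝ => fun i : Fin n => ω i) :=
      fun n => measurable_pi_lambda _ fun i => measurable_pi_apply _
    -- bound for Pm
    have hPmS : ∀ k, Pm (S k) ≤ ENNReal.ofReal (rexp (-((k : ℝ) / 8))) := by
      intro k
      have hS' : MeasurableSet {x : Fin (N k) → ℝ | B (N k) / 2 ≤ ∑ i : Fin (N k), a (i : ℕ) * x i} :=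
        measurableSet_le measurable_const
          (Finset.measurable_sum _ fun i _ => (measurable_pi_apply i).const_mul _)
      have hpre : S k = (fun ω (i : Fin (N k)) => ω i) ⁻¹'
          {x : Fin (N k) → ℝ | B (N k) / 2 ≤ ∑ i : Fin (N k), a (i : ℕ) * x i} := by
        ext ω
        simp only [hSdef, Set.mem_setOf_eq, Set.mem_preimage]
        rw [Fin.sum_univ_eq_sum_range (fun i => a i * ω i)]
      rw [hpre, ← Measure.map_apply (hproj (N k)) hS', hPm (N k)]
      refine le_trans (gauss_pi_bound (N k) (fun i => a i) (fun _ => 0) (B (N k) / 2)) ?_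
      apply ENNReal.ofReal_le_ofReal
      apply exp_le_exp.mpr
      have h1 : (∑ i : Fin (N k), (a (i : ℕ) * 0 / 2 + (a (i : ℕ)) ^ 2 / 8))
          = B (N k) / 8 := by
        simp only [mul_zero, zero_div, zero_add]
        rw [← Finset.sum_div, Fin.sum_univ_eq_sum_range (fun i => (a i) ^ 2)]
      rw [h1]
      have := hN k
      linarith
    -- bound for Pp
    have hPpS : ∀ k, Pp ((S k)ᶜ) ≤ ENNReal.ofReal (rexp (-((k : ℝ) / 8))) := by
      intro k
      have hS' : MeasurableSet {x : Fin (N k) → ℝ | -(B (N k) / 2) ≤ ∑ i : Fin (N k), -(a (i : ℕ)) * x i} :=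
        measurableSet_le measurable_const
          (Finset.measurable_sum _ fun i _ => (measurable_pi_apply i).const_mul _)
      have hsub : (S k)ᶜ ⊆ (fun ω (i : Fin (N k)) => ω i) ⁻¹'
          {x : Fin (N k) → ℝ | -(B (N k) / 2) ≤ ∑ i : Fin (N k), -(a (i : ℕ)) * x i} := by
        intro ω hω
        simp only [hSdef, Set.mem_compl_iff, Set.mem_setOf_eq, not_le] at hω
        simp only [Set.mem_preimage, Set.mem_setOf_eq]
        have hrw : (∑ i : Fin (N k), -(a (i : ℕ)) * ω i)
            = -∑ i ∈ Finset.range (N k), a i * ω i := by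
          rw [Fin.sum_univ_eq_sum_range (fun i => -a i * ω i) (N k), ← Finset.sum_neg_distrib]
          exact Finset.sum_congr rfl fun i _ => by ring
        rw [hrw]
        linarith
      refine le_trans (measure_mono hsub) ?_
      rw [← Measure.map_apply (hproj (N k)) hS', hPp (N k)]
      refine le_trans (gauss_pi_bound (N k) (fun i => -(a i)) (fun i => a i)
        (-(B (N k) / 2))) ?_
      apply ENNReal.ofReal_le_ofReal
      apply exp_le_exp.mpr
      have h1 : (∑ i : Fin (N k), (-(a (i : ℕ)) * a (i : ℕ) / 2 + (-(a (i : ℕ))) ^ 2 / 8))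
          = -(B (N k)) * 3 / 8 := by
        rw [show (fun i : Fin (N k) => -(a (i : ℕ)) * a (i : ℕ) / 2 + (-(a (i : ℕ))) ^ 2 / 8)
          = fun i : Fin (N k) => ((a (i : ℕ)) ^ 2) * (-3/8) from funext fun i => by ring]
        rw [← Finset.sum_mul, Fin.sum_univ_eq_sum_range (fun i => (a i) ^ 2)]
        ring
      rw [h1]
      have := hN k
      linarith
    -- geometric summability
    set r : ENNReal := ENNReal.ofReal (rexp (-(1 : ℝ) / 8)) with hrdef
    have hε : ∀ k : ℕ, ENNReal.ofReal (rexp (-((k : ℝ) / 8))) = r ^ k := by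
      intro k
      rw [hrdef, ← ENNReal.ofReal_pow (exp_nonneg _), ← exp_nat_mul]
      congr 2
      ring
    have hrlt : r < 1 := by
      rw [hrdef]
      refine ENNReal.ofReal_lt_one.mpr (exp_lt_one_iff.mpr (by norm_num))
    -- the separating event
    set C : ℕ → Set (ℕ → ℝ) := fun n => ⋂ (k) (_ : n ≤ k), S k with hCdef
    set E : Set (ℕ → ℝ) := ⋃ n, C n with hEdef
    have hCmeas : ∀ n, MeasurableSet (C n) :=
      fun n => MeasurableSet.iInter fun k => MeasurableSet.iInter fun _ => hSmeas k
    have hEmeas : MeasurableSet E := MeasurableSet.iUnion hCmeas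
    have hrpow0 : Tendsto (fun k : ℕ => r ^ k) atTop (nhds 0) :=
      ENNReal.tendsto_pow_atTop_nhds_zero_of_lt_one hrlt
    have hPmE : Pm E = 0 := by
      refine measure_iUnion_null fun n => ?_
      have hle : ∀ k, n ≤ k → Pm (C n) ≤ r ^ k := by
        intro k hk
        refine le_trans (measure_mono ?_) ((hε k) ▸ hPmS k)
        exact Set.iInter₂_subset k hk
      have : Pm (C n) ≤ 0 :=
        ge_of_tendsto hrpow0 (eventually_atTop.mpr ⟨n, hle⟩)
      exact le_antisymm this zero_le
    have hPpE : Pp Eᶜ = 0 := by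
      have htail : ∀ n : ℕ, Pp Eᶜ ≤ r ^ n * (1 - r)⁻¹ := by
        intro n
        have hsub : Eᶜ ⊆ ⋃ j : ℕ, (S (n + j))ᶜ := by
          intro ω hω
          simp only [hEdef, Set.mem_compl_iff, Set.mem_iUnion, not_exists] at hω
          have := hω n
          simp only [hCdef, Set.mem_iInter, not_forall] at this
          obtain ⟨k, hk, hωk⟩ := this
          refine Set.mem_iUnion.mpr ⟨k - n, ?_⟩
          rwa [Nat.add_sub_cancel' hk]
        refine le_trans (measure_mono hsub) (le_trans (measure_iUnion_le _) ?_)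
        calc ∑' j : ℕ, Pp ((S (n + j))ᶜ) ≤ ∑' j : ℕ, r ^ (n + j) :=
              ENNReal.tsum_le_tsum fun j => (hε (n + j)) ▸ hPpS (n + j)
          _ = r ^ n * ∑' j : ℕ, r ^ j := by
              simp_rw [pow_add]
              rw [ENNReal.tsum_mul_left]
          _ = r ^ n * (1 - r)⁻¹ := by rw [ENNReal.tsum_geometric]
      have hlim : Tendsto (fun n : ℕ => r ^ n * (1 - r)⁻¹) atTop (nhds 0) := by
        have hne : (1 - r)⁻¹ ≠ ⊤ := by
          rw [Ne, ENNReal.inv_eq_top, tsub_eq_zero_iff_le]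
          exact fun h => absurd (lt_of_lt_of_le hrlt h) (lt_irrefl _)
        simpa using ENNReal.Tendsto.mul_const hrpow0 (Or.inr hne)
      have : Pp Eᶜ ≤ 0 := ge_of_tendsto hlim (Eventually.of_forall htail)
      exact le_antisymm this zero_le
    exact ⟨Eᶜ, hEmeas.compl, hPpE, by rwa [compl_compl]⟩
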